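/- arXiv:2009.07671 — 5 statements merged into one kernel-verified Lean document; each statement's English description precedes it below -/
import Mathlib

section
/- Let A_3 = ℤ³ ⧸ ⟨(28, −8, −8)⟩ be the quotient of the free abelian group ℤ³ by the (cyclic) subgroup generated by the vector (28, −8, −8). Then the class of the vector (7, −2, −2) in A_3 has order exactly 4, i.e. 4·(7,−2,−2) lies in ℤ·(28,−8,−8) but 2·(7,−2,−2) does not. -/
lemma mem_iff (m : ℤ) :
    ((7*m, -2*m, -2*m) : ℤ × ℤ × ℤ) ∈
      AddSubgroup.zmultiples ((28, -8, -8) : ℤ × ℤ × ℤ) ↔ (4 : ℤ) ∣ m := by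
  constructor
  · rintro ⟨k, hk⟩
    have h1 : k * 28 = 7 * m := by
      have := congrArg Prod.fst hk
      simpa [Prod.smul_def, smul_eq_mul] using this
    exact ⟨k, by linarith⟩
  · rintro ⟨k, rfl⟩
    refine ⟨k, ?_⟩
    simp [Prod.ext_iff, Prod.smul_def, smul_eq_mul]
    constructor <;> first | trivial | ring

lemma smul_eq (m : ℤ) : m • ((7, -2, -2) : ℤ × ℤ × ℤ) = (7*m, -2*m, -2*m) := by
  simp [Prod.ext_iff, Prod.smul_def, smul_eq_mul]
  constructor <;> first | trivial | ring

/-- The class of `(7, -2, -2)` in `ℤ³ ⧸ ⟨(28, -8, -8)⟩` has order exactly `4`: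
`4 • (7,-2,-2)` lies in `ℤ • (28,-8,-8)` but `2 • (7,-2,-2)` does not. -/
theorem stmt_0 :
    addOrderOf
      (QuotientAddGroup.mk (s := AddSubgroup.zmultiples ((28, -8, -8) : ℤ × ℤ × ℤ))
        ((7, -2, -2) : ℤ × ℤ × ℤ)) = 4 ∧
    (4 : ℤ) • ((7, -2, -2) : ℤ × ℤ × ℤ) ∈
      AddSubgroup.zmultiples ((28, -8, -8) : ℤ × ℤ × ℤ) ∧
    (2 : ℤ) • ((7, -2, -2) : ℤ × ℤ × ℤ) ∉
      AddSubgroup.zmultiples ((28, -8, -8) : ℤ × ℤ × ℤ) := by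
  have key : ∀ m : ℤ, m • ((7, -2, -2) : ℤ × ℤ × ℤ) ∈
      AddSubgroup.zmultiples ((28, -8, -8) : ℤ × ℤ × ℤ) ↔ (4 : ℤ) ∣ m := by
    intro m
    rw [smul_eq]; exact mem_iff m
  refine ⟨?_, (key 4).mpr ⟨1, by norm_num⟩,
    fun h => absurd ((key 2).mp h) (by norm_num)⟩
  have hzero : ∀ m : ℕ, m • (QuotientAddGroup.mk (s := AddSubgroup.zmultiples
      ((28, -8, -8) : ℤ × ℤ × ℤ)) ((7, -2, -2) : ℤ × ℤ × ℤ)) = 0 ↔ (4 : ℤ) ∣ (m : ℤ) := by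
    intro m
    rw [← QuotientAddGroup.mk_nsmul, QuotientAddGroup.eq_zero_iff]
    rw [← key (m : ℤ), natCast_zsmul]
  rw [addOrderOf_eq_iff (by norm_num)]
  refine ⟨(hzero 4).mpr ⟨1, by norm_num⟩, ?_⟩
  intro m hm hm' h
  have := (hzero m).mp h
  omega
end

section
/- Let g ≥ 5 be an odd integer, set m = (g−1)/2, let F_g = ℤ^(1+2m) with standard basis e_0, e_1, …, e_m, f_1, …, f_m, and let R_g = (8g+4)·e_0 − Σ_{j=1}^{m} 2(j+1)(g−j)·e_j − Σ_{i=1}^{m} 4i(g−i)·f_i ∈ F_g. Then for every vector β ∈ F_g whose e_0-coordinate is zero, the element 4·((2g+1)·e_0 + β) does NOT lie in the subgroup ℤ·R_g generated by R_g; equivalently, the class of (2g+1)·e_0 + β in the quotient group A_g = F_g ⧸ (ℤ·R_g) is not annihilated by 4. -/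
/-- The free abelian group `F_g = ℤ^(1+2m)`, with coordinates
`(e₀-coefficient, (e₁,…,e_m)-coefficients, (f₁,…,f_m)-coefficients)`. -/
abbrev Fg (m : ℕ) : Type := ℤ × (Fin m → ℤ) × (Fin m → ℤ)

/-- The Cornalba–Harris relation vector
`R_g = (8g+4)·e₀ − Σ_{j=1}^m 2(j+1)(g−j)·e_j − Σ_{i=1}^m 4i(g−i)·f_i`,
where the `Fin m`-index `k` corresponds to the index `k+1 ∈ {1,…,m}`. -/
def Rg (g m : ℕ) : Fg m :=
  ((8 * (g : ℤ) + 4),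
   fun j => -(2 * (((j : ℕ) : ℤ) + 2) * ((g : ℤ) - (((j : ℕ) : ℤ) + 1))),
   fun i => -(4 * (((i : ℕ) : ℤ) + 1) * ((g : ℤ) - (((i : ℕ) : ℤ) + 1))))

/-- For odd `g ≥ 5` and any `β ∈ F_g` with vanishing `e₀`-coordinate, the element
`4·((2g+1)·e₀ + β)` does not lie in the subgroup generated by the
Cornalba–Harris relation `R_g` (with `m = (g−1)/2`). -/
theorem stmt_3 (g : ℕ) (hodd : Odd g) (hge : 5 ≤ g)
    (b₁ b₂ : Fin ((g - 1) / 2) → ℤ) :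
    (4 : ℤ) • (((2 * (g : ℤ) + 1, b₁, b₂)) : Fg ((g - 1) / 2)) ∉
      AddSubgroup.zmultiples (Rg g ((g - 1) / 2)) := by
  intro h
  rw [AddSubgroup.mem_zmultiples_iff] at h
  obtain ⟨n, hn⟩ := h
  rw [Prod.ext_iff, Prod.ext_iff] at hn
  obtain ⟨h1, h2, h3⟩ := hn
  simp only [Rg, smul_eq_mul, Prod.smul_fst, Prod.smul_snd] at h1 h2
  -- first coordinate forces n = 1
  have hn1 : n = 1 := by nlinarith [h1]
  subst hn1
  -- m ≥ 2
  have hm : 2 ≤ (g - 1) / 2 := by omega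
  have hidx : (1 : ℕ) < (g - 1) / 2 := by omega
  have h2' := congrFun h2 ⟨1, hidx⟩
  simp only [Pi.smul_apply, smul_eq_mul, one_mul] at h2'
  -- h2' : 4 * b₁ ⟨1,_⟩ = -(2 * (1 + 2) * (g - (1 + 1)))
  obtain ⟨k, hk⟩ := hodd
  have hg : (g : ℤ) = 2 * k + 1 := by exact_mod_cast hk
  push_cast at h2'
  omega
end

section
/- For every integer g ≥ 2, no odd prime p divides all the integers in the set S_g = {8g+4} ∪ {2(j+1)(g−j) : 1 ≤ j ≤ ⌊(g−1)/2⌋} ∪ {4i(g−i) : 1 ≤ i ≤ ⌊g/2⌋}; equivalently, the greatest common divisor of S_g is a power of 2. -/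
/-- The set of coefficients of the Cornalba–Harris relation (with the `[Δ₀]`-term deleted):
`S_g = {8g+4} ∪ {2(j+1)(g−j) : 1 ≤ j ≤ ⌊(g−1)/2⌋} ∪ {4i(g−i) : 1 ≤ i ≤ ⌊g/2⌋}`. -/
def Sg (g : ℕ) : Finset ℕ :=
  insert (8 * g + 4)
    (((Finset.Icc 1 ((g - 1) / 2)).image fun j => 2 * (j + 1) * (g - j)) ∪
     ((Finset.Icc 1 (g / 2)).image fun i => 4 * i * (g - i)))

lemma mem_Sg_right {g i : ℕ} (h1 : 1 ≤ i) (h2 : i ≤ g / 2) :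
    4 * i * (g - i) ∈ Sg g := by
  apply Finset.mem_insert_of_mem
  apply Finset.mem_union_right
  exact Finset.mem_image.mpr ⟨i, Finset.mem_Icc.mpr ⟨h1, h2⟩, rfl⟩

lemma key (g : ℕ) (hg : 2 ≤ g) (p : ℕ) (hp : p.Prime) (hodd : Odd p) :
    ∃ s ∈ Sg g, ¬ p ∣ s := by
  have hp2 : p ≠ 2 := by rintro rfl; exact (Nat.not_odd_iff_even.mpr even_two) hodd
  have hnd4 : ¬ p ∣ 4 := by
    intro h
    have : p ∣ 2 * 2 := by norm_num at h ⊢; omega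
    rcases (hp.dvd_mul).mp this with h | h <;>
      exact hp2 ((Nat.prime_dvd_prime_iff_eq hp Nat.prime_two).mp h)
  by_cases h0 : p ∣ 8 * g + 4
  · have h1 : p ∣ 2 * g + 1 := by
      have : p ∣ 4 * (2 * g + 1) := by ring_nf; ring_nf at h0; exact h0
      rcases (hp.dvd_mul).mp this with h | h
      · exact absurd h hnd4
      · exact h
    by_cases h3 : p = 3
    · subst h3
      have hg4 : 4 ≤ g := by omega
      refine ⟨4 * 2 * (g - 2), mem_Sg_right (by norm_num) (by omega), ?_⟩
      intro hd
      rcases (Nat.Prime.dvd_mul (by norm_num)).mp hd with h | h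
      · norm_num at h
      · omega
    · refine ⟨4 * 1 * (g - 1), mem_Sg_right le_rfl (by omega), ?_⟩
      intro hd
      have hd' : p ∣ g - 1 := by
        rcases (hp.dvd_mul).mp hd with h | h
        · exact absurd (by simpa using h) hnd4
        · exact h
      have h2 : p ∣ 2 * (g - 1) := Dvd.dvd.mul_left hd' 2
      have h3' : p ∣ 3 := by
        have h := Nat.dvd_sub h1 h2
        rwa [show (2 * g + 1) - 2 * (g - 1) = 3 from by omega] at h
      exact h3 ((Nat.prime_dvd_prime_iff_eq hp (by norm_num)).mp h3')
  · exact ⟨8 * g + 4, Finset.mem_insert_self _ _, h0⟩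

/-- For every `g ≥ 2`, no odd prime divides all elements of `S_g`; equivalently,
the greatest common divisor of `S_g` is a power of `2`. -/
theorem stmt_4 (g : ℕ) (hg : 2 ≤ g) :
    (∀ p : ℕ, p.Prime → Odd p → ∃ s ∈ Sg g, ¬ p ∣ s) ∧
    (∃ k : ℕ, (Sg g).gcd id = 2 ^ k) := by
  refine ⟨key g hg, ?_⟩
  set d := (Sg g).gcd id with hd
  have hdvd : d ∣ 8 * g + 4 := Finset.gcd_dvd (Finset.mem_insert_self _ _)
  have hdne : d ≠ 0 := by
    intro h; rw [h] at hdvd; omega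
  have huniq : ∀ {q : ℕ}, q.Prime → q ∣ d → q = 2 := by
    intro q hq hqd
    rcases hq.eq_two_or_odd' with h | h
    · exact h
    · obtain ⟨s, hs, hns⟩ := key g hg q hq h
      exact absurd (hqd.trans (show d ∣ s from Finset.gcd_dvd hs)) hns
  exact ⟨_, Nat.eq_prime_pow_of_unique_prime_dvd hdne huniq⟩
end

section
/- Let g ≥ 5 be an odd integer, set m = (g−1)/2, let F_g = ℤ^(1+2m) with standard basis e_0, e_1, …, e_m, f_1, …, f_m, let R_g = (8g+4)·e_0 − Σ_{j=1}^{m} 2(j+1)(g−j)·e_j − Σ_{i=1}^{m} 4i(g−i)·f_i, and let A_g = F_g ⧸ (ℤ·R_g). Then every element a ∈ A_g with 4·a = 0 already satisfies 2·a = 0; in other words, A_g contains no element of order 4. -/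
/-- For odd `g ≥ 5` and `m = (g−1)/2`, every element `a` of the quotient group
`A_g = F_g ⧸ ⟨R_g⟩` with `4·a = 0` already satisfies `2·a = 0`; i.e. `A_g` has
no element of order `4`. -/
theorem stmt_6 (g : ℕ) (hodd : Odd g) (hge : 5 ≤ g)
    (a : Fg ((g - 1) / 2) ⧸ AddSubgroup.zmultiples (Rg g ((g - 1) / 2))) :
    4 • a = 0 → 2 • a = 0 := by
  intro h4
  obtain ⟨x, rfl⟩ := QuotientAddGroup.mk'_surjective _ a
  rw [← map_nsmul, QuotientAddGroup.mk'_apply, QuotientAddGroup.eq_zero_iff,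
    AddSubgroup.mem_zmultiples_iff] at h4
  rw [← map_nsmul, QuotientAddGroup.mk'_apply, QuotientAddGroup.eq_zero_iff,
    AddSubgroup.mem_zmultiples_iff]
  obtain ⟨k, hk⟩ := h4
  have hm2 : 2 ≤ (g - 1) / 2 := by omega
  obtain ⟨t, ht⟩ := hodd
  have hcoord := congrArg (fun v : Fg ((g - 1) / 2) => v.2.1 ⟨1, by omega⟩) hk
  simp only [Rg, Prod.smul_snd, Prod.smul_fst, Pi.smul_apply, smul_eq_mul] at hcoord
  have hk2 : Even k := by
    have hg : (g : ℤ) = 2 * t + 1 := by push_cast [ht]; ring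
    rw [hg] at hcoord
    simp only [nsmul_eq_mul] at hcoord
    have h6 : 2 * (3 * (k * (2 * (t : ℤ) - 1))) = 2 * (-2 * (x.2.1 ⟨1, by omega⟩)) := by
      linear_combination -hcoord
    have heq : 3 * (k * (2 * (t : ℤ) - 1)) = -2 * (x.2.1 ⟨1, by omega⟩) :=
      mul_left_cancel₀ two_ne_zero h6
    have he : Even (3 * (k * (2 * (t : ℤ) - 1))) :=
      ⟨-(x.2.1 ⟨1, by omega⟩), by linarith⟩
    rcases Int.even_mul.mp he with h | h
    · exact absurd h (by decide)
    rcases Int.even_mul.mp h with h | h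
    · exact h
    · exact absurd h (by simp [Int.even_sub, Int.even_mul, parity_simps])
  obtain ⟨l, hl⟩ := hk2
  refine ⟨l, ?_⟩
  have h2 : (2 : ℤ) • (l • Rg g ((g - 1) / 2)) = (2 : ℤ) • ((2 : ℤ) • x) := by
    rw [smul_smul, smul_smul]
    calc (2 * l) • Rg g ((g - 1) / 2) = k • Rg g ((g - 1) / 2) := by
          rw [hl]; ring_nf
      _ = 4 • x := hk
      _ = ((2:ℤ) * 2) • x := by norm_num
  have h3 := smul_right_injective (Fg ((g - 1) / 2)) (two_ne_zero) h2
  rw [h3]; norm_num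
end

section
/- Let g ≥ 3 be an odd integer, set m = (g−1)/2, let F_g = ℤ^(1+2m) with standard basis e_0, e_1, …, e_m, f_1, …, f_m, let R_g = (8g+4)·e_0 − Σ_{j=1}^{m} 2(j+1)(g−j)·e_j − Σ_{i=1}^{m} 4i(g−i)·f_i, and let A_g = F_g ⧸ (ℤ·R_g). Then for every odd prime p, the group A_g contains no element of order p. -/
lemma stmt_7_aux (g m : ℕ) (hm : g = 2 * m + 1) (hm1 : 0 < m)
    (p : ℕ) (hp : p.Prime) (hpodd : Odd p) (x : Fg m) :
    addOrderOf (QuotientAddGroup.mk x :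
      Fg m ⧸ AddSubgroup.zmultiples (Rg g m)) ≠ p := by
  intro hord
  have hp1 : 1 < p := hp.one_lt
  have hpz : (p : ℤ) ≠ 0 := by exact_mod_cast hp.ne_zero
  have hpZ : Prime (p : ℤ) := Nat.prime_iff_prime_int.1 hp
  have hp2 : p ≠ 2 := by rintro rfl; exact (Nat.not_odd_iff_even.2 (by decide)) hpodd
  -- p • x lies in the subgroup
  have h1 : p • (QuotientAddGroup.mk x :
      Fg m ⧸ AddSubgroup.zmultiples (Rg g m)) = 0 := by
    rw [← hord]; exact addOrderOf_nsmul_eq_zero _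
  have h2 : (p : ℤ) • x ∈ AddSubgroup.zmultiples (Rg g m) := by
    rw [← QuotientAddGroup.eq_zero_iff]
    rw [natCast_zsmul]
    rw [show (QuotientAddGroup.mk (p • x) :
      Fg m ⧸ AddSubgroup.zmultiples (Rg g m)) = p • QuotientAddGroup.mk x from rfl]
    exact h1
  obtain ⟨k, hk⟩ := AddSubgroup.mem_zmultiples_iff.mp h2
  by_cases hpk : (p : ℤ) ∣ k
  · -- then x ∈ ⟨R⟩, so a = 0, contradicting order p
    obtain ⟨q, rfl⟩ := hpk
    have hx : x = q • Rg g m := by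
      have h := hk
      rw [mul_smul] at h
      exact (smul_right_injective (Fg m) hpz h).symm
    have hz : (QuotientAddGroup.mk x :
        Fg m ⧸ AddSubgroup.zmultiples (Rg g m)) = 0 := by
      rw [QuotientAddGroup.eq_zero_iff]
      exact ⟨q, hx.symm⟩
    rw [hz, addOrderOf_zero] at hord
    omega
  · -- then p divides the f₁- and e_m-coordinates of R, which is impossible
    have hf := congrFun (congrArg (fun z : Fg m => z.2.2) hk) ⟨0, hm1⟩
    have he := congrFun (congrArg (fun z : Fg m => z.2.1) hk) ⟨m - 1, by omega⟩
    simp only [Rg, Prod.smul_snd, Prod.smul_fst, Pi.smul_apply, smul_eq_mul] at hf he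
    have hgz : (g : ℤ) = 2 * (m : ℤ) + 1 := by exact_mod_cast congrArg (Nat.cast : ℕ → ℤ) hm
    have hc1 : ((m - 1 : ℕ) : ℤ) = (m : ℤ) - 1 := by omega
    -- divisibilities
    have hdf : (p : ℤ) ∣ k * (-(8 * (m : ℤ))) := by
      refine ⟨x.2.2 ⟨0, hm1⟩, ?_⟩
      rw [← hf]
      rw [show (-(4 * ((((0 : ℕ) : ℤ)) + 1) * ((g : ℤ) - ((((0 : ℕ) : ℤ)) + 1))))
          = -(8 * (m : ℤ)) from by rw [hgz]; push_cast; ring]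
    have hde : (p : ℤ) ∣ k * (-(2 * ((m : ℤ) + 1) * ((m : ℤ) + 1))) := by
      refine ⟨x.2.1 ⟨m - 1, by omega⟩, ?_⟩
      rw [← he]
      rw [show (-(2 * (((m - 1 : ℕ) : ℤ) + 2) * ((g : ℤ) - (((m - 1 : ℕ) : ℤ) + 1))))
          = -(2 * ((m : ℤ) + 1) * ((m : ℤ) + 1)) from by rw [hc1, hgz]; ring]
    have hdf' : (p : ℤ) ∣ -(8 * (m : ℤ)) := (hpZ.dvd_mul.mp hdf).resolve_left hpk
    have hde' : (p : ℤ) ∣ -(2 * ((m : ℤ) + 1) * ((m : ℤ) + 1)) :=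
      (hpZ.dvd_mul.mp hde).resolve_left hpk
    -- move to ℕ
    have hdfn : p ∣ 8 * m := by
      have h : (p : ℤ) ∣ ((8 * m : ℕ) : ℤ) := by push_cast; exact dvd_neg.mp hdf'
      exact_mod_cast h
    have hden : p ∣ 2 * (m + 1) * (m + 1) := by
      have h : (p : ℤ) ∣ ((2 * (m + 1) * (m + 1) : ℕ) : ℤ) := by
        push_cast; exact dvd_neg.mp hde'
      exact_mod_cast h
    have hnp2 : ¬ p ∣ 2 := fun h => hp2 ((Nat.prime_dvd_prime_iff_eq hp Nat.prime_two).mp h)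
    have hdm : p ∣ m := by
      have h8 : ¬ p ∣ 8 := by
        intro h
        exact hnp2 (hp.dvd_of_dvd_pow (n := 3) (by norm_num; exact h))
      exact ((Nat.Prime.dvd_mul hp).mp hdfn).resolve_left h8
    have hdm1 : p ∣ m + 1 := by
      rcases (Nat.Prime.dvd_mul hp).mp hden with h | h
      · rcases (Nat.Prime.dvd_mul hp).mp h with h | h
        · exact absurd h hnp2
        · exact h
      · exact h
    have hd1 : p ∣ 1 := by simpa using Nat.dvd_sub hdm1 hdm
    have := Nat.dvd_one.mp hd1
    omega

/-- For odd `g ≥ 3`, `m = (g−1)/2`, and every odd prime `p`, the quotient group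
`A_g = F_g ⧸ ⟨R_g⟩` contains no element of order `p`. -/
theorem stmt_7 (g : ℕ) (hodd : Odd g) (hge : 3 ≤ g) (p : ℕ) (hp : p.Prime) (hpodd : Odd p)
    (a : Fg ((g - 1) / 2) ⧸ AddSubgroup.zmultiples (Rg g ((g - 1) / 2))) :
    addOrderOf a ≠ p := by
  induction a using QuotientAddGroup.induction_on with
  | H x =>
    exact stmt_7_aux g ((g - 1) / 2)
      (by obtain ⟨t, ht⟩ := hodd; omega) (by omega) p hp hpodd x
end
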